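/- Let Φ be the poset of closed subsets of Δ ordered by inclusion, and consider the functor from Φ to the category of groups sending α to the subgroup GL_n(R)_α of GL_n(R), with structure maps the inclusions GL_n(R)_α ↪ GL_n(R)_β for α ⊆ β. Then there is a group isomorphism St_n(R) ≅ colim_{α ∈ Φ} GL_n(R)_α under which the canonical homomorphism colim_{α ∈ Φ} GL_n(R)_α → GL_n(R) induced by the inclusions GL_n(R)_α ≤ GL_n(R) corresponds to the homomorphism φ : St_n(R) → GL_n(R) with φ(x_ij(r)) = ε_ij(r). -/

import Mathlib

/-- The elementary matrix `ε_{ij}(r)`. -/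
def elemMat {n : ℕ} {R : Type*} [Ring R] (i j : Fin n) (r : R) :
    Matrix (Fin n) (Fin n) R :=
  1 + Matrix.single i j r

/-- The elementary matrix `ε_{ij}(r)` as a unit (invertible matrix) for `i ≠ j`. -/
def elemUnit {n : ℕ} {R : Type*} [Ring R] (i j : Fin n) (hij : i ≠ j) (r : R) :
    (Matrix (Fin n) (Fin n) R)ˣ where
  val := elemMat i j r
  inv := elemMat i j (-r)
  val_inv := by
    have h0 : Matrix.single i j r * Matrix.single i j (-r) = 0 :=
      Matrix.single_mul_single_of_ne _ _ _ _ hij.symm _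
    simp [elemMat, mul_add, add_mul, h0, ← Matrix.single_add, add_assoc]
  inv_val := by
    have h0 : Matrix.single i j (-r) * Matrix.single i j r = 0 :=
      Matrix.single_mul_single_of_ne _ _ _ _ hij.symm _
    simp [elemMat, mul_add, add_mul, h0, ← Matrix.single_add, add_assoc]

/-- `GL_n(R)_α`. -/
def glSub {n : ℕ} (R : Type*) [Ring R] (α : Set (Fin n × Fin n)) :
    Subgroup (Matrix (Fin n) (Fin n) R)ˣ :=
  Subgroup.closure
    {u | ∃ (i j : Fin n) (hij : i ≠ j) (r : R), (i, j) ∈ α ∧ u = elemUnit i j hij r}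

open scoped commutatorElement

/-- The Steinberg relations on the generators `x_{ij}(r)`, `(i,j) ∈ α`, `r ∈ R`. -/
def stRels (n : ℕ) (R : Type*) [Ring R] (α : Set (Fin n × Fin n))
    (hc : ∀ i j k : Fin n, (i, j) ∈ α → (j, k) ∈ α → i ≠ k → (i, k) ∈ α) :
    Set (FreeGroup ({p : Fin n × Fin n // p ∈ α} × R)) :=
  {w | ∃ (p : {p : Fin n × Fin n // p ∈ α}) (a b : R),
      w = FreeGroup.of (p, a) * FreeGroup.of (p, b) * (FreeGroup.of (p, a + b))⁻¹} ∪
  {w | ∃ (p q : {p : Fin n × Fin n // p ∈ α}) (a b : R),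
      p.1.2 ≠ q.1.1 ∧ p.1.1 ≠ q.1.2 ∧
      w = ⁅FreeGroup.of (p, a), FreeGroup.of (q, b)⁆} ∪
  {w | ∃ (p q : {p : Fin n × Fin n // p ∈ α}) (a b : R) (h : p.1.2 = q.1.1)
      (hil : p.1.1 ≠ q.1.2),
      w = ⁅FreeGroup.of (p, a), FreeGroup.of (q, b)⁆ *
        (FreeGroup.of
          (⟨(p.1.1, q.1.2), hc p.1.1 p.1.2 q.1.2 p.2 (by rw [h]; exact q.2) hil⟩, a * b))⁻¹}

/-- The set `Δ` of all off-diagonal positions. -/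
def deltaSet (n : ℕ) : Set (Fin n × Fin n) := {p | p.1 ≠ p.2}

/-- `α` is a closed subset of the off-diagonal positions. -/
def IsClosedSubset {n : ℕ} (α : Set (Fin n × Fin n)) : Prop :=
  (∀ p ∈ α, p.1 ≠ p.2) ∧ ∀ i j k : Fin n, (i, j) ∈ α → (j, k) ∈ α → (i, k) ∈ α

/-- The Steinberg group `St_n(R)`. -/
abbrev Steinberg (n : ℕ) (R : Type) [Ring R] :=
  PresentedGroup (stRels n R (deltaSet n)
    (fun i _ k _ _ hik => show (i, k) ∈ deltaSet n from hik))

section Part1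

namespace StProof

open Matrix

variable {n : ℕ} {R : Type} [Ring R]

lemma elemMat_mul (i j k l : Fin n) (a b : R) (hjk : j ≠ k) :
    elemMat i j a * elemMat k l b = 1 + Matrix.single i j a + Matrix.single k l b := by
  have h0 : Matrix.single i j a * Matrix.single k l b = 0 :=
    Matrix.single_mul_single_of_ne _ _ _ _ hjk _
  simp [elemMat, mul_add, add_mul, h0, add_assoc]

lemma elemUnit_mul_same (i j : Fin n) (hij : i ≠ j) (a b : R) :
    elemUnit i j hij a * elemUnit i j hij b = elemUnit i j hij (a + b) := by
  refine Units.ext ?_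
  show elemMat i j a * elemMat i j b = elemMat i j (a+b)
  rw [elemMat_mul i j i j a b hij.symm]
  simp [elemMat, Matrix.single_add, add_assoc]

lemma elemUnit_commute (i j k l : Fin n) (hij : i ≠ j) (hkl : k ≠ l)
    (hjk : j ≠ k) (hil : i ≠ l) (a b : R) :
    Commute (elemUnit i j hij a) (elemUnit k l hkl b) := by
  have : elemUnit i j hij a * elemUnit k l hkl b = elemUnit k l hkl b * elemUnit i j hij a := by
    refine Units.ext ?_
    show elemMat i j a * elemMat k l b = elemMat k l b * elemMat i j a
    rw [elemMat_mul i j k l a b hjk, elemMat_mul k l i j b a (Ne.symm hil)]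
    abel
  exact this

lemma elemUnit_commutator (i j l : Fin n) (hij : i ≠ j) (hjl : j ≠ l) (hil : i ≠ l) (a b : R) :
    ⁅elemUnit i j hij a, elemUnit j l hjl b⁆ = elemUnit i l hil (a * b) := by
  have key : elemUnit i j hij a * elemUnit j l hjl b
      = elemUnit i l hil (a * b) * (elemUnit j l hjl b * elemUnit i j hij a) := by
    refine Units.ext ?_
    show elemMat i j a * elemMat j l b = elemMat i l (a*b) * (elemMat j l b * elemMat i j a)
    have h1 : elemMat i j a * elemMat j l b
        = 1 + Matrix.single i j a + Matrix.single j l b + Matrix.single i l (a*b) := by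
      have h0 : Matrix.single i j a * Matrix.single j l b = Matrix.single i l (a*b) :=
        Matrix.single_mul_single_same _ _ _ _ _
      simp [elemMat, mul_add, add_mul, h0, add_assoc]
    have h2 : elemMat j l b * elemMat i j a
        = 1 + Matrix.single j l b + Matrix.single i j a :=
      elemMat_mul j l i j b a (Ne.symm hil)
    rw [h1, h2]
    have e1 : Matrix.single i l (a*b) * Matrix.single j l b = 0 :=
      Matrix.single_mul_single_of_ne _ _ _ _ (Ne.symm hjl) _
    have e2 : Matrix.single i l (a*b) * Matrix.single i j a = 0 :=
      Matrix.single_mul_single_of_ne _ _ _ _ (Ne.symm hil) _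
    simp only [elemMat, mul_add, add_mul, mul_one, one_mul, e1, e2, add_zero]
    abel
  rw [commutatorElement_def, key]
  group

end StProof

end Part1
section Part2

namespace StProof

open Matrix

variable {n : ℕ} {R : Type} [Ring R]

/-- The relations defining the Steinberg group. -/
abbrev stR (n : ℕ) (R : Type) [Ring R] : Set (FreeGroup ({p : Fin n × Fin n // p ∈ deltaSet n} × R)) :=
  stRels n R (deltaSet n) (fun i _ k _ _ hik => show (i, k) ∈ deltaSet n from hik)

/-- generator of the Steinberg group -/
def xgen (p : {p : Fin n × Fin n // p ∈ deltaSet n}) (r : R) : Steinberg n R :=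
  PresentedGroup.of (p, r)

lemma mk_rel {w : FreeGroup ({p : Fin n × Fin n // p ∈ deltaSet n} × R)}
    (hw : w ∈ stR n R) : (PresentedGroup.mk (stR n R) w : Steinberg n R) = 1 :=
  (QuotientGroup.eq_one_iff _).2 (Subgroup.subset_normalClosure hw)

lemma st_add (p : {p : Fin n × Fin n // p ∈ deltaSet n}) (a b : R) :
    (xgen p a : Steinberg n R) * xgen p b = xgen p (a + b) := by
  have := mk_rel (w := FreeGroup.of (p, a) * FreeGroup.of (p, b) *
      (FreeGroup.of (p, a + b))⁻¹) (Or.inl (Or.inl ⟨p, a, b, rfl⟩))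
  rw [_root_.map_mul, _root_.map_mul, map_inv] at this
  rw [← mul_inv_eq_one]
  exact this

lemma st_zero (p : {p : Fin n × Fin n // p ∈ deltaSet n}) :
    (xgen p (0 : R) : Steinberg n R) = 1 := by
  have := st_add p (0 : R) 0
  rw [add_zero] at this
  exact (mul_eq_left (a := xgen p (0:R))).1 this

lemma st_inv (p : {p : Fin n × Fin n // p ∈ deltaSet n}) (a : R) :
    (xgen p a : Steinberg n R)⁻¹ = xgen p (-a) := by
  refine inv_eq_of_mul_eq_one_right ?_
  rw [st_add, add_neg_cancel, st_zero]

lemma st_comm (p q : {p : Fin n × Fin n // p ∈ deltaSet n}) (a b : R)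
    (h1 : p.1.2 ≠ q.1.1) (h2 : p.1.1 ≠ q.1.2) :
    Commute (xgen p a : Steinberg n R) (xgen q b) := by
  rw [← commutatorElement_eq_one_iff_commute]
  have := mk_rel (w := ⁅FreeGroup.of (p, a), FreeGroup.of (q, b)⁆)
    (Or.inl (Or.inr ⟨p, q, a, b, h1, h2, rfl⟩))
  rw [map_commutatorElement] at this
  exact this

lemma st_commutator (p q : {p : Fin n × Fin n // p ∈ deltaSet n}) (a b : R)
    (h : p.1.2 = q.1.1) (hil : p.1.1 ≠ q.1.2)
    (hm : (p.1.1, q.1.2) ∈ deltaSet n) :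
    ⁅(xgen p a : Steinberg n R), xgen q b⁆ = xgen ⟨(p.1.1, q.1.2), hm⟩ (a * b) := by
  have := mk_rel (w := ⁅FreeGroup.of (p, a), FreeGroup.of (q, b)⁆ *
      (FreeGroup.of ((⟨(p.1.1, q.1.2), hm⟩ : {p : Fin n × Fin n // p ∈ deltaSet n}), a * b))⁻¹)
    (Or.inr ⟨p, q, a, b, h, hil, rfl⟩)
  rw [_root_.map_mul, map_inv, map_commutatorElement, mul_inv_eq_one] at this
  exact this

end StProof

end Part2
section Part3

namespace StProof

open Matrix

variable {n : ℕ} {R : Type} [Ring R]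

/-- images of the generators in `GL_n(R)` -/
def phiF : ({p : Fin n × Fin n // p ∈ deltaSet n} × R) → (Matrix (Fin n) (Fin n) R)ˣ :=
  fun x => elemUnit x.1.1.1 x.1.1.2 x.1.2 x.2

lemma phi_rels : ∀ w ∈ stR n R, FreeGroup.lift (phiF (n := n) (R := R)) w = 1 := by
  rintro w ((⟨p, a, b, rfl⟩ | ⟨p, q, a, b, h1, h2, rfl⟩) |
    ⟨⟨⟨pi, pj⟩, hp⟩, ⟨⟨qi, qj⟩, hq⟩, a, b, h, hil, rfl⟩)
  · rw [_root_.map_mul, _root_.map_mul, map_inv, mul_inv_eq_one]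
    simp only [FreeGroup.lift_apply_of, phiF]
    exact elemUnit_mul_same _ _ _ a b
  · rw [map_commutatorElement]
    simp only [FreeGroup.lift_apply_of, phiF]
    exact commutatorElement_eq_one_iff_commute.2
      (elemUnit_commute _ _ _ _ p.2 q.2 h1 h2 a b)
  · simp only at h hil
    subst h
    rw [_root_.map_mul, map_inv, map_commutatorElement, mul_inv_eq_one]
    simp only [FreeGroup.lift_apply_of, phiF]
    exact elemUnit_commutator pi pj qj hp hq hil a b

/-- The homomorphism `St_n(R) → GL_n(R)`. -/
noncomputable def phi : Steinberg n R →* (Matrix (Fin n) (Fin n) R)ˣ :=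
  PresentedGroup.toGroup phi_rels

@[simp] lemma phi_of (p : {p : Fin n × Fin n // p ∈ deltaSet n}) (r : R) :
    phi (xgen p r) = elemUnit p.1.1 p.1.2 p.2 r :=
  PresentedGroup.toGroup.of phi_rels

/-- height of an index: the number of `α`-predecessors -/
noncomputable def ht (α : Set (Fin n × Fin n)) (j : Fin n) : ℕ :=
  {k | (k, j) ∈ α}.ncard

lemma ht_lt {α : Set (Fin n × Fin n)} (hα : IsClosedSubset α) {i j : Fin n}
    (h : (i, j) ∈ α) : ht α i < ht α j := by
  apply Set.ncard_lt_ncard _ (Set.toFinite _)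
  constructor
  · exact fun k hk => hα.2 k i j hk h
  · intro hsub
    have : (i, i) ∈ α := hsub h
    exact hα.1 _ this rfl

lemma ht_lt_card {α : Set (Fin n × Fin n)} (hα : IsClosedSubset α) (j : Fin n) :
    ht α j < n := by
  have hss : {k | (k, j) ∈ α} ⊂ Set.univ := by
    rw [Set.ssubset_univ_iff]
    intro he
    have : (j, j) ∈ α := by
      have : j ∈ {k | (k, j) ∈ α} := he ▸ Set.mem_univ j
      exact this
    exact hα.1 _ this rfl
  have := Set.ncard_lt_ncard hss (Set.toFinite _)
  rwa [Set.ncard_univ, Nat.card_eq_fintype_card, Fintype.card_fin] at this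

lemma ht_fst_lt {α : Set (Fin n × Fin n)} (hα : IsClosedSubset α)
    {p : Fin n × Fin n} (hp : p ∈ α) : ht α p.1 < ht α p.2 :=
  ht_lt hα (show (p.1, p.2) ∈ α from Prod.mk.eta ▸ hp)

end StProof

end Part3
section Part4

namespace StProof

open Matrix

variable {n : ℕ} {R : Type} [Ring R]

/-- generators of the Steinberg group with positions in `α` and column-height at least `d` -/
def stGens (R : Type) [Ring R] (α : Set (Fin n × Fin n)) (d : ℕ) : Set (Steinberg n R) :=
  {x | ∃ (p : {p : Fin n × Fin n // p ∈ deltaSet n}) (r : R),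
      p.1 ∈ α ∧ d ≤ ht α p.1.2 ∧ x = xgen p r}

/-- The subgroup of the Steinberg group generated by `stGens` -/
def Hgrp (R : Type) [Ring R] (α : Set (Fin n × Fin n)) (d : ℕ) : Subgroup (Steinberg n R) :=
  Subgroup.closure (stGens R α d)

lemma Hgrp_mono_level (α : Set (Fin n × Fin n)) (d : ℕ) :
    Hgrp R α (d+1) ≤ Hgrp R α d :=
  Subgroup.closure_mono (fun x ⟨p, r, h1, h2, h3⟩ => ⟨p, r, h1, le_trans (Nat.le_succ d) h2, h3⟩)

/-- positions of `α` at level exactly `d` -/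
def Lev (α : Set (Fin n × Fin n)) (d : ℕ) : Type :=
  {p : Fin n × Fin n // p ∈ α ∧ ht α p.2 = d}

noncomputable instance (α : Set (Fin n × Fin n)) (d : ℕ) : Fintype (Lev α d) := by
  have : Finite (Lev α d) := Subtype.finite
  exact Fintype.ofFinite _

instance (α : Set (Fin n × Fin n)) (d : ℕ) : DecidableEq (Lev α d) := by
  unfold Lev; infer_instance

variable {α : Set (Fin n × Fin n)} (hα : IsClosedSubset α)

lemma mem_delta_of_mem (hp : ∀ p ∈ α, (p:Fin n × Fin n).1 ≠ p.2) {p : Fin n × Fin n}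
    (h : p ∈ α) : p ∈ deltaSet n := hp p h

/-- level-`d` generator -/
def xg (d : ℕ) (p : Lev α d) (r : R) : Steinberg n R :=
  xgen ⟨p.1, hα.1 p.1 p.2.1⟩ r

lemma xg_mem (d : ℕ) (p : Lev α d) (r : R) : xg hα d p r ∈ stGens R α d :=
  ⟨⟨p.1, hα.1 p.1 p.2.1⟩, r, p.2.1, le_of_eq p.2.2.symm, rfl⟩

lemma xg_comm (d : ℕ) (p q : Lev α d) (a b : R) :
    Commute (xg hα d p a) (xg hα d q b) := by
  apply st_comm
  · intro e
    have h1 := ht_fst_lt hα q.2.1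
    rw [← e, p.2.2, q.2.2] at h1
    exact lt_irrefl d h1
  · intro e
    have h1 := ht_fst_lt hα p.2.1
    rw [e, p.2.2, q.2.2] at h1
    exact lt_irrefl d h1

lemma mu_comm (d : ℕ) (f : Lev α d → R) (s : Finset (Lev α d)) :
    (s : Set (Lev α d)).Pairwise (Function.onFun Commute fun p => xg hα d p (f p)) :=
  fun p _ q _ _ => xg_comm hα d p q (f p) (f q)

/-- the "diagonal-plus-level-`d`" unipotent element of the Steinberg group -/
noncomputable def mu (d : ℕ) (f : Lev α d → R) : Steinberg n R :=
  (Finset.univ : Finset (Lev α d)).noncommProd (fun p => xg hα d p (f p))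
    (mu_comm hα d f _)

lemma mu_mem (d : ℕ) (f : Lev α d → R) : mu hα d f ∈ Hgrp R α d := by
  apply Subgroup.noncommProd_mem
  intro p _
  exact Subgroup.subset_closure (xg_mem hα d p (f p))

lemma mu_add (d : ℕ) (f g : Lev α d → R) :
    mu hα d (f + g) = mu hα d f * mu hα d g := by
  unfold mu
  refine (Finset.noncommProd_congr rfl (g := (fun p => xg hα d p (f p)) *
    (fun p => xg hα d p (g p))) (fun p _ => ?_) ?_).trans
    (Finset.noncommProd_mul_distrib _ _
      (fun p _ q _ _ => xg_comm hα d p q (f p) (f q))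
      (fun p _ q _ _ => xg_comm hα d p q (g p) (g q))
      (fun p _ q _ _ => xg_comm hα d p q (g p) (f q)))
  · show xg hα d p ((f + g) p) = xg hα d p (f p) * xg hα d p (g p)
    simp only [Pi.add_apply, xg]
    rw [st_add]

lemma mu_zero (d : ℕ) : mu hα d (0 : Lev α d → R) = 1 := by
  unfold mu
  rw [Finset.noncommProd_eq_pow_card _ _ _ 1 (fun p _ => by
    show xgen _ (0:R) = 1
    exact st_zero _), one_pow]

lemma mu_single (d : ℕ) (p : Lev α d) (r : R) :
    mu hα d (Pi.single p r) = xg hα d p r := by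
  unfold mu
  have he : (Finset.univ : Finset (Lev α d)) = insert p (Finset.univ.erase p) :=
    (Finset.insert_erase (Finset.mem_univ p)).symm
  rw [Finset.noncommProd_congr he (fun q _ => rfl)
    (mu_comm hα d _ _)]
  show Finset.noncommProd (insert p (Finset.univ.erase p))
    (fun q => xg hα d q (Pi.single p r q)) (mu_comm hα d _ _) = _
  rw [Finset.noncommProd_insert_of_notMem _ _ _ _ (Finset.notMem_erase _ _),
    Finset.noncommProd_eq_pow_card _ _ _ 1, one_pow, mul_one, Pi.single_eq_same]
  intro q hq
  rw [Pi.single_eq_of_ne (Finset.mem_erase.1 hq).1]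
  exact st_zero _

lemma mu_inv (d : ℕ) (f : Lev α d → R) : (mu hα d f)⁻¹ = mu hα d (-f) := by
  refine inv_eq_of_mul_eq_one_right ?_
  rw [← mu_add, add_neg_cancel, mu_zero]

include hα

/-- image of `mu` under `phi` -/
lemma noncommProd_elemMat (d : ℕ) (f : Lev α d → R) (s : Finset (Lev α d)) :
    ∀ comm, s.noncommProd (fun p => elemMat p.1.1 p.1.2 (f p)) comm
      = 1 + ∑ p ∈ s, Matrix.single p.1.1 p.1.2 (f p) := by
  induction s using Finset.cons_induction with
  | empty => intro comm; simp
  | cons x s hx ih =>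
    intro comm
    rw [Finset.noncommProd_cons, ih (comm.mono (fun y hy => Finset.mem_cons_of_mem hy)),
      Finset.sum_cons]
    have hz : Matrix.single x.1.1 x.1.2 (f x) *
        (∑ p ∈ s, Matrix.single p.1.1 p.1.2 (f p)) = 0 := by
      rw [Finset.mul_sum]
      refine Finset.sum_eq_zero (fun p _ => ?_)
      refine Matrix.single_mul_single_of_ne _ _ _ _ ?_ _
      intro e
      have h1 := ht_fst_lt hα p.2.1
      rw [← e, x.2.2, p.2.2] at h1
      exact lt_irrefl d h1
    rw [elemMat, add_mul, one_mul, mul_add, mul_one, hz, add_zero]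
    abel

lemma phi_mu (d : ℕ) (f : Lev α d → R) :
    (phi (mu hα d f)).val
      = 1 + ∑ p : Lev α d, Matrix.single p.1.1 p.1.2 (f p) := by
  have h0 : (phi (mu hα d f)).val
      = ((Units.coeHom (Matrix (Fin n) (Fin n) R)).comp phi) (mu hα d f) := rfl
  rw [h0]
  unfold mu
  rw [Finset.map_noncommProd]
  exact (Finset.noncommProd_congr rfl (fun p _ => by
      show (phi (xg hα d p (f p))).val = elemMat p.1.1 p.1.2 (f p)
      show (phi (xgen ⟨p.1, hα.1 p.1 p.2.1⟩ (f p))).val = elemMat p.1.1 p.1.2 (f p)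
      rw [phi_of]
      rfl) _).trans (noncommProd_elemMat hα d f Finset.univ _)

end StProof

end Part4
section Part5

namespace StProof

open Matrix

variable {n : ℕ} {R : Type} [Ring R] {α : Set (Fin n × Fin n)} (hα : IsClosedSubset α)

/-- the subgroup of units whose columns of height `≤ d` agree with the identity -/
def colFix (α : Set (Fin n × Fin n)) (d : ℕ) : Subgroup (Matrix (Fin n) (Fin n) R)ˣ where
  carrier := {u | ∀ c : Fin n, ht α c ≤ d → ∀ i,
      u.val i c = (1 : Matrix (Fin n) (Fin n) R) i c}
  one_mem' := fun _ _ _ => rfl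
  mul_mem' := by
    intro u v hu hv c hc i
    show (u.val * v.val) i c = _
    rw [Matrix.mul_apply,
      Finset.sum_congr rfl (fun j _ => by rw [hv c hc j]),
      ← Matrix.mul_apply, Matrix.mul_one]
    exact hu c hc i
  inv_mem' := by
    intro u hu c hc i
    have h2 : ((u⁻¹ : (Matrix (Fin n) (Fin n) R)ˣ).val * u.val) i c = (u⁻¹).val i c := by
      rw [Matrix.mul_apply,
        Finset.sum_congr rfl (fun j _ => by rw [hu c hc j]),
        ← Matrix.mul_apply, Matrix.mul_one]
    show (u⁻¹).val i c = _
    rw [← h2, Units.inv_mul]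

lemma mem_colFix {u : (Matrix (Fin n) (Fin n) R)ˣ} {d : ℕ} :
    u ∈ colFix α d ↔ ∀ c : Fin n, ht α c ≤ d → ∀ i,
      u.val i c = (1 : Matrix (Fin n) (Fin n) R) i c := Iff.rfl

lemma Hgrp_col (d : ℕ) : Hgrp R α (d+1) ≤ (colFix α d).comap phi := by
  rw [Hgrp, Subgroup.closure_le]
  rintro x ⟨p, r, hpα, hdle, rfl⟩
  simp only [Set.mem_preimage, SetLike.mem_coe, Subgroup.mem_comap]
  rw [mem_colFix]
  intro c hc i
  rw [phi_of]
  show elemMat p.1.1 p.1.2 r i c = _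
  rw [elemMat, Matrix.add_apply]
  have hz : Matrix.single p.1.1 p.1.2 r i c = 0 := by
    apply Matrix.single_apply_of_ne
    rintro ⟨-, h2⟩
    rw [← h2] at hc
    omega
  rw [hz, add_zero]

lemma xg_inv (d : ℕ) (p : Lev α d) (r : R) : (xg hα d p r)⁻¹ = xg hα d p (-r) :=
  st_inv _ _

include hα in
lemma conj_mem (d : ℕ) (p : Lev α d) (r : R) :
    ∀ m ∈ Hgrp R α (d+1), xg hα d p r * m * (xg hα d p r)⁻¹ ∈ Hgrp R α (d+1) := by
  intro m hm
  induction hm using Subgroup.closure_induction with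
  | mem x hx =>
    obtain ⟨q, b, hqα, hqd, rfl⟩ := hx
    by_cases hck : p.1.2 = q.1.1
    · -- commutator case
      have hil : p.1.1 ≠ q.1.2 := by
        intro e
        have h1 := ht_fst_lt hα p.2.1
        have h2 : ht α p.1.2 = d := p.2.2
        have h3 : ht α q.1.2 ≥ d + 1 := hqd
        rw [e] at h1
        omega
      have hmem : (p.1.1, q.1.2) ∈ deltaSet n := hil
      have hcomm : ⁅xg hα d p r, xgen q b⁆ = xgen ⟨(p.1.1, q.1.2), hmem⟩ (r * b) :=
        st_commutator ⟨p.1, hα.1 p.1 p.2.1⟩ q r b hck hil hmem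
      have key : xg hα d p r * xgen q b * (xg hα d p r)⁻¹
          = ⁅xg hα d p r, xgen q b⁆ * xgen q b := by
        rw [commutatorElement_def]
        group
      rw [key, hcomm]
      have hα2 : (p.1.1, q.1.2) ∈ α := by
        refine hα.2 p.1.1 p.1.2 q.1.2 (Prod.mk.eta ▸ p.2.1) ?_
        rw [hck]
        exact Prod.mk.eta ▸ hqα
      refine mul_mem (Subgroup.subset_closure ?_) (Subgroup.subset_closure ⟨q, b, hqα, hqd, rfl⟩)
      exact ⟨⟨(p.1.1, q.1.2), hmem⟩, r * b, hα2, hqd, rfl⟩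
    · -- commuting case
      have hil : p.1.1 ≠ q.1.2 := by
        intro e
        have h1 := ht_fst_lt hα p.2.1
        have h2 : ht α p.1.2 = d := p.2.2
        have h3 : ht α q.1.2 ≥ d + 1 := hqd
        rw [e] at h1
        omega
      have hcomm : xg hα d p r * xgen q b = xgen q b * xg hα d p r :=
        (st_comm ⟨p.1, hα.1 p.1 p.2.1⟩ q r b hck hil).eq
      rw [hcomm, mul_assoc, mul_inv_cancel, mul_one]
      exact Subgroup.subset_closure ⟨q, b, hqα, hqd, rfl⟩
  | one => simpa using one_mem _
  | mul x y hx hy ihx ihy =>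
    have : xg hα d p r * (x * y) * (xg hα d p r)⁻¹
        = (xg hα d p r * x * (xg hα d p r)⁻¹) * (xg hα d p r * y * (xg hα d p r)⁻¹) := by
      group
    rw [this]
    exact mul_mem ihx ihy
  | inv x hx ihx =>
    have : xg hα d p r * x⁻¹ * (xg hα d p r)⁻¹
        = (xg hα d p r * x * (xg hα d p r)⁻¹)⁻¹ := by group
    rw [this]
    exact inv_mem ihx

include hα in
lemma xg_mem_normalizer (d : ℕ) (p : Lev α d) (r : R) :
    xg hα d p r ∈ Subgroup.normalizer (Hgrp R α (d+1) : Set (Steinberg n R)) := by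
  rw [Subgroup.mem_normalizer_iff]
  intro m
  constructor
  · exact conj_mem hα d p r m
  · intro hm
    have h2 := conj_mem hα d p (-r) _ hm
    rw [← xg_inv] at h2
    have e : (xg hα d p r)⁻¹ * (xg hα d p r * m * (xg hα d p r)⁻¹) * ((xg hα d p r)⁻¹)⁻¹
        = m := by group
    rwa [e] at h2

include hα in
lemma mu_mem_normalizer (d : ℕ) (f : Lev α d → R) :
    mu hα d f ∈ Subgroup.normalizer (Hgrp R α (d+1) : Set (Steinberg n R)) :=
  Subgroup.noncommProd_mem _ _ (fun p _ => xg_mem_normalizer hα d p (f p))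

/-- the decomposition subgroup `A_d · H_{d+1}` -/
noncomputable def decompSub (d : ℕ) : Subgroup (Steinberg n R) where
  carrier := {x | ∃ (f : Lev α d → R) (m : Steinberg n R),
      m ∈ Hgrp R α (d+1) ∧ x = mu hα d f * m}
  one_mem' := ⟨0, 1, one_mem _, by rw [mu_zero, one_mul]⟩
  mul_mem' := by
    rintro x y ⟨f, m, hm, rfl⟩ ⟨g, m', hm', rfl⟩
    refine ⟨f + g, ((mu hα d g)⁻¹ * m * mu hα d g) * m', mul_mem ?_ hm', ?_⟩
    · have hn := inv_mem (mu_mem_normalizer hα d g)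
      have h1 := (Subgroup.mem_normalizer_iff.1 hn m).1 hm
      rwa [inv_inv] at h1
    · rw [mu_add]
      group
  inv_mem' := by
    rintro x ⟨f, m, hm, rfl⟩
    refine ⟨-f, mu hα d f * m⁻¹ * (mu hα d f)⁻¹,
      (Subgroup.mem_normalizer_iff.1 (mu_mem_normalizer hα d f) m⁻¹).1 (inv_mem hm), ?_⟩
    rw [← mu_inv]
    group

include hα in
lemma Hgrp_decomp (d : ℕ) : Hgrp R α d ≤ decompSub hα d := by
  rw [Hgrp, Subgroup.closure_le]
  rintro x ⟨p, r, hpα, hd, rfl⟩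
  rcases eq_or_lt_of_le hd with he | hl
  · refine ⟨Pi.single ⟨p.1, hpα, he.symm⟩ r, 1, one_mem _, ?_⟩
    exact ((mul_one _).trans (mu_single hα d ⟨p.1, hpα, he.symm⟩ r)).symm
  · exact ⟨0, xgen p r, Subgroup.subset_closure ⟨p, r, hpα, hl, rfl⟩,
      by rw [mu_zero, one_mul]⟩

include hα in
lemma key_inj (k : ℕ) : ∀ d, n ≤ d + k → ∀ g ∈ Hgrp R α d, phi g = 1 → g = 1 := by
  induction k with
  | zero =>
    intro d hd g hg _
    have hempty : stGens R α d = (∅ : Set (Steinberg n R)) := by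
      ext x
      simp only [Set.mem_empty_iff_false, iff_false]
      rintro ⟨p, r, hpα, hdle, rfl⟩
      have hlt := ht_lt_card hα p.1.2
      omega
    rw [Hgrp, hempty, Subgroup.closure_empty] at hg
    simpa using hg
  | succ k ih =>
    intro d hd g hg hphi
    obtain ⟨f, m, hm, rfl⟩ := Hgrp_decomp hα d hg
    have hcol : ∀ c : Fin n, ht α c ≤ d → ∀ i,
        (phi m).val i c = (1 : Matrix (Fin n) (Fin n) R) i c :=
      mem_colFix.1 (Subgroup.mem_comap.1 (Hgrp_col d hm))
    have h1 : phi (mu hα d f) * phi m = 1 := by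
      rw [← _root_.map_mul]
      exact hphi
    have hval : (phi (mu hα d f)).val * (phi m).val = 1 := by
      rw [← Units.val_mul, h1, Units.val_one]
    have hf : f = 0 := by
      funext p
      have e1 : ((phi (mu hα d f)).val * (phi m).val) p.1.1 p.1.2
          = (phi (mu hα d f)).val p.1.1 p.1.2 := by
        rw [Matrix.mul_apply,
          Finset.sum_congr rfl (fun j _ => by rw [hcol p.1.2 (le_of_eq p.2.2) j]),
          ← Matrix.mul_apply, Matrix.mul_one]
      have e2 : (phi (mu hα d f)).val p.1.1 p.1.2 = f p := by
        rw [phi_mu, Matrix.add_apply, Matrix.one_apply_ne (hα.1 p.1 p.2.1), zero_add,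
          Matrix.sum_apply]
        rw [Finset.sum_eq_single p]
        · exact Matrix.single_apply_same _ _ _
        · intro q _ hq
          apply Matrix.single_apply_of_ne
          rintro ⟨hq1, hq2⟩
          exact hq (Subtype.ext (Prod.ext hq1 hq2))
        · exact fun h => absurd (Finset.mem_univ p) h
      have e3 : ((phi (mu hα d f)).val * (phi m).val) p.1.1 p.1.2 = 0 := by
        rw [hval]
        exact Matrix.one_apply_ne (hα.1 p.1 p.2.1)
      rw [e1, e2] at e3
      exact e3
    rw [hf, mu_zero, one_mul] at hphi ⊢
    exact ih (d+1) (by omega) m hm hphi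

end StProof

end Part5
section Part6

namespace StProof

open Matrix

variable {n : ℕ} {R : Type} [Ring R] {α : Set (Fin n × Fin n)} (hα : IsClosedSubset α)

include hα in
lemma phi_injOn : ∀ g ∈ Hgrp R α 0, phi g = 1 → g = 1 :=
  key_inj hα n 0 (by omega)

include hα in
lemma phi_inj2 {g g' : Steinberg n R} (hg : g ∈ Hgrp R α 0) (hg' : g' ∈ Hgrp R α 0)
    (h : phi g = phi g') : g = g' := by
  have h1 : phi (g⁻¹ * g') = 1 := by
    rw [_root_.map_mul, map_inv, h, inv_mul_cancel]
  have := phi_injOn hα (g⁻¹ * g') (mul_mem (inv_mem hg) hg') h1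
  rwa [inv_mul_eq_one] at this

lemma elem_mem_glSub {γ : Set (Fin n × Fin n)} {i j : Fin n} (hij : i ≠ j) (r : R)
    (h : (i, j) ∈ γ) : elemUnit i j hij r ∈ glSub R γ :=
  Subgroup.subset_closure ⟨i, j, hij, r, h, rfl⟩

lemma xgen_mem_Hgrp {p : {p : Fin n × Fin n // p ∈ deltaSet n}} {r : R} (hp : p.1 ∈ α) :
    (xgen p r : Steinberg n R) ∈ Hgrp R α 0 :=
  Subgroup.subset_closure ⟨p, r, hp, Nat.zero_le _, rfl⟩

lemma map_Hgrp : Subgroup.map phi (Hgrp R α 0) = glSub R α := by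
  rw [Hgrp, MonoidHom.map_closure, glSub]
  congr 1
  ext u
  constructor
  · rintro ⟨x, ⟨p, r, hpα, -, rfl⟩, rfl⟩
    refine ⟨p.1.1, p.1.2, p.2, r, Prod.mk.eta ▸ hpα, ?_⟩
    rw [phi_of]
  · rintro ⟨i, j, hij, r, hijα, rfl⟩
    refine ⟨xgen ⟨(i, j), hij⟩ r, ⟨⟨(i, j), hij⟩, r, hijα, Nat.zero_le _, rfl⟩, ?_⟩
    rw [phi_of]

/-- `phi` restricted to a map `Hgrp R α 0 → glSub R α` -/
noncomputable def toGl : Hgrp R α 0 →* glSub R α :=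
  ((phi (n := n) (R := R)).domRestrict (Hgrp R α 0)).codRestrict (glSub R α)
    (fun x => by
      rw [← map_Hgrp]
      exact Subgroup.mem_map.2 ⟨x.1, x.2, rfl⟩)

lemma toGl_apply (x : Hgrp R α 0) : (toGl x).1 = phi x.1 := rfl

include hα in
lemma toGl_bijective : Function.Bijective (toGl (n := n) (R := R) (α := α)) := by
  constructor
  · intro x y h
    have : phi x.1 = phi y.1 := by
      rw [← toGl_apply, ← toGl_apply, h]

    exact Subtype.ext (phi_inj2 hα x.2 y.2 this)
  · intro u
    have hu : u.1 ∈ Subgroup.map phi (Hgrp R α 0) := by rw [map_Hgrp]; exact u.2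
    obtain ⟨x, hx, he⟩ := Subgroup.mem_map.1 hu
    exact ⟨⟨x, hx⟩, Subtype.ext he⟩

/-- the isomorphism `Hgrp R α 0 ≃* glSub R α` -/
noncomputable def glEquiv : (Hgrp R α 0 : Subgroup (Steinberg n R)) ≃* glSub R α :=
  MulEquiv.ofBijective toGl (toGl_bijective hα)

/-- the canonical map `glSub R α → Steinberg n R` -/
noncomputable def kappa : glSub R α →* Steinberg n R :=
  (Hgrp R α 0).subtype.comp (glEquiv hα).symm.toMonoidHom

lemma kappa_mem (x : glSub R α) : kappa hα x ∈ Hgrp R α 0 :=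
  ((glEquiv hα).symm x).2

lemma phi_kappa (x : glSub R α) : phi (kappa hα x) = x.1 := by
  have h2 : toGl ((glEquiv hα).symm x) = x :=
    MulEquiv.ofBijective_apply_symm_apply toGl (toGl_bijective hα)
  have h3 : (toGl ((glEquiv hα).symm x)).1 = x.1 := congrArg Subtype.val h2
  exact h3

lemma kappa_elem {i j : Fin n} (hij : i ≠ j) (r : R) (hmem : (i, j) ∈ α)
    (hu : elemUnit i j hij r ∈ glSub R α) :
    kappa hα ⟨elemUnit i j hij r, hu⟩ = xgen ⟨(i, j), hij⟩ r := by
  refine phi_inj2 hα (kappa_mem hα _) (xgen_mem_Hgrp hmem) ?_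
  rw [phi_kappa hα, phi_of]

lemma Hgrp_mono {β : Set (Fin n × Fin n)} (hsub : α ⊆ β) :
    (Hgrp R α 0 : Subgroup (Steinberg n R)) ≤ Hgrp R β 0 :=
  Subgroup.closure_mono (fun x ⟨p, r, h1, _, h3⟩ => ⟨p, r, hsub h1, Nat.zero_le _, h3⟩)

lemma kappa_compat {β : Set (Fin n × Fin n)} (hβ : IsClosedSubset β) (hsub : α ⊆ β)
    (x : (Matrix (Fin n) (Fin n) R)ˣ) (hxα : x ∈ glSub R α) (hxβ : x ∈ glSub R β) :
    kappa hβ ⟨x, hxβ⟩ = kappa hα ⟨x, hxα⟩ := by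
  refine phi_inj2 hβ (kappa_mem hβ _) (Hgrp_mono hsub (kappa_mem hα _)) ?_
  rw [phi_kappa, phi_kappa]

end StProof

end Part6
section Part7

namespace StProof

open Matrix

variable {n : ℕ} {R : Type} [Ring R]

lemma closed_single {p : Fin n × Fin n} (hp : p.1 ≠ p.2) :
    IsClosedSubset ({p} : Set (Fin n × Fin n)) := by
  constructor
  · rintro q hq
    rw [Set.mem_singleton_iff] at hq
    rw [hq]
    exact hp
  · intro i j k h1 h2
    exfalso
    rw [Set.mem_singleton_iff] at h1 h2
    apply hp
    have e1 : p.1 = j := by rw [← h2]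
    have e2 : p.2 = j := by rw [← h1]
    rw [e1, e2]

lemma closed_pair {p q : Fin n × Fin n} (hp : p.1 ≠ p.2) (hq : q.1 ≠ q.2)
    (h1 : p.2 ≠ q.1) (h2 : p.1 ≠ q.2) :
    IsClosedSubset ({p, q} : Set (Fin n × Fin n)) := by
  constructor
  · rintro x (hx | hx) <;> rw [hx]
    exacts [hp, hq]
  · intro i j k ha hb
    exfalso
    rcases ha with ha | ha <;> rcases hb with hb | hb
    · exact hp (by rw [show p.1 = j from by rw [← hb], show p.2 = j from by rw [← ha]])
    · exact h1 (by rw [show p.2 = j from by rw [← ha], show q.1 = j from by rw [← hb]])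
    · exact h2 (by rw [show p.1 = j from by rw [← hb], show q.2 = j from by rw [← ha]])
    · exact hq (by rw [show q.1 = j from by rw [← hb], show q.2 = j from by rw [← ha]])

lemma closed_triple {i j l : Fin n} (hij : i ≠ j) (hjl : j ≠ l) (hil : i ≠ l) :
    IsClosedSubset ({(i, j), (j, l), (i, l)} : Set (Fin n × Fin n)) := by
  constructor
  · rintro x (hx | hx | hx) <;> rw [hx]
    exacts [hij, hjl, hil]
  · intro a b c ha hb
    have pfst : ∀ {u v : Fin n} {w : Fin n × Fin n}, (u, v) = w → u = w.1 := by
      rintro u v w rfl; rfl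
    have psnd : ∀ {u v : Fin n} {w : Fin n × Fin n}, (u, v) = w → v = w.2 := by
      rintro u v w rfl; rfl
    rcases ha with ha | ha | ha <;> rcases hb with hb | hb | hb
    · exact absurd ((psnd ha).symm.trans (pfst hb) : j = i) hij.symm
    · -- (a,b) = (i,j), (b,c) = (j,l): result (a,c) = (i,l)
      refine Or.inr (Or.inr ?_)
      have e1 : a = i := pfst ha
      have e2 : c = l := psnd hb
      rw [e1, e2]
      rfl
    · exact absurd ((psnd ha).symm.trans (pfst hb) : j = i) hij.symm
    · exact absurd ((psnd ha).symm.trans (pfst hb) : l = i) hil.symm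
    · exact absurd ((psnd ha).symm.trans (pfst hb) : l = j) hjl.symm
    · exact absurd ((psnd ha).symm.trans (pfst hb) : l = i) hil.symm
    · exact absurd ((psnd ha).symm.trans (pfst hb) : l = i) hil.symm
    · exact absurd ((psnd ha).symm.trans (pfst hb) : l = j) hjl.symm
    · exact absurd ((psnd ha).symm.trans (pfst hb) : l = i) hil.symm

end StProof

end Part7
section Part8

namespace StProof

open Matrix

variable {n : ℕ} {R : Type} [Ring R]
variable (G : Type) [Group G]
  (f : ∀ α : Set (Fin n × Fin n), IsClosedSubset α → (glSub R α →* G))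

/-- candidate images of the Steinberg generators in `G` -/
def bigF : ({p : Fin n × Fin n // p ∈ deltaSet n} × R) → G :=
  fun x => f {x.1.1} (closed_single x.1.2)
    ⟨elemUnit x.1.1.1 x.1.1.2 x.1.2 x.2,
      elem_mem_glSub x.1.2 x.2 (Set.mem_singleton_iff.2 Prod.mk.eta)⟩

variable (hcompat : ∀ (α β : Set (Fin n × Fin n)) (hα : IsClosedSubset α)
    (hβ : IsClosedSubset β), α ⊆ β → ∀ (x : (Matrix (Fin n) (Fin n) R)ˣ)
    (hxα : x ∈ glSub R α) (hxβ : x ∈ glSub R β), f β hβ ⟨x, hxβ⟩ = f α hα ⟨x, hxα⟩)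

include hcompat in
lemma bigF_eq {γ : Set (Fin n × Fin n)} (hγ : IsClosedSubset γ)
    (p : {p : Fin n × Fin n // p ∈ deltaSet n}) (r : R)
    (hpγ : p.1 ∈ γ) (hm : elemUnit p.1.1 p.1.2 p.2 r ∈ glSub R γ) :
    bigF G f (p, r) = f γ hγ ⟨elemUnit p.1.1 p.1.2 p.2 r, hm⟩ :=
  (hcompat {p.1} γ (closed_single p.2) hγ
    (Set.singleton_subset_iff.2 hpγ) _ _ _).symm

include hcompat in
lemma bigF_rels : ∀ w ∈ stR n R, FreeGroup.lift (bigF G f) w = 1 := by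
  rintro w ((⟨p, a, b, rfl⟩ | ⟨p, q, a, b, h1, h2, rfl⟩) |
    ⟨⟨⟨pi, pj⟩, hp⟩, ⟨⟨qi, qj⟩, hq⟩, a, b, h, hil, rfl⟩)
  · rw [_root_.map_mul, _root_.map_mul, map_inv, mul_inv_eq_one]
    simp only [FreeGroup.lift_apply_of]
    show bigF G f (p, a) * bigF G f (p, b) = bigF G f (p, a + b)
    unfold bigF
    rw [← _root_.map_mul]
    exact congrArg (f {p.1} (closed_single p.2))
      (Subtype.ext (elemUnit_mul_same p.1.1 p.1.2 p.2 a b))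
  · rw [map_commutatorElement]
    simp only [FreeGroup.lift_apply_of]
    have hγ : IsClosedSubset ({p.1, q.1} : Set (Fin n × Fin n)) :=
      closed_pair p.2 q.2 h1 h2
    have hpm : p.1 ∈ ({p.1, q.1} : Set (Fin n × Fin n)) := Set.mem_insert _ _
    have hqm : q.1 ∈ ({p.1, q.1} : Set (Fin n × Fin n)) :=
      Set.mem_insert_iff.2 (Or.inr rfl)
    have hma : elemUnit p.1.1 p.1.2 p.2 a ∈ glSub R {p.1, q.1} :=
      elem_mem_glSub p.2 a (Prod.mk.eta ▸ hpm)
    have hmb : elemUnit q.1.1 q.1.2 q.2 b ∈ glSub R {p.1, q.1} :=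
      elem_mem_glSub q.2 b (Prod.mk.eta ▸ hqm)
    rw [bigF_eq G f hcompat hγ p a hpm hma, bigF_eq G f hcompat hγ q b hqm hmb]
    have hAB : (⟨elemUnit p.1.1 p.1.2 p.2 a, hma⟩ : glSub R {p.1, q.1}) *
        ⟨elemUnit q.1.1 q.1.2 q.2 b, hmb⟩ =
        ⟨elemUnit q.1.1 q.1.2 q.2 b, hmb⟩ * ⟨elemUnit p.1.1 p.1.2 p.2 a, hma⟩ :=
      Subtype.ext ((elemUnit_commute p.1.1 p.1.2 q.1.1 q.1.2 p.2 q.2 h1 h2 a b).eq)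
    exact commutatorElement_eq_one_iff_commute.2
      ((show Commute _ _ from hAB).map (f {p.1, q.1} hγ))
  · simp only at h hil
    subst h
    set γ : Set (Fin n × Fin n) := {(pi, pj), (pj, qj), (pi, qj)} with hγdef
    have hγ : IsClosedSubset γ := closed_triple hp hq hil
    have hm1 : ((pi, pj) : Fin n × Fin n) ∈ γ := Set.mem_insert _ _
    have hm2 : ((pj, qj) : Fin n × Fin n) ∈ γ :=
      Set.mem_insert_iff.2 (Or.inr (Set.mem_insert _ _))
    have hm3 : ((pi, qj) : Fin n × Fin n) ∈ γ :=
      Set.mem_insert_iff.2 (Or.inr (Set.mem_insert_iff.2 (Or.inr rfl)))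
    have hga : elemUnit pi pj hp a ∈ glSub R γ := elem_mem_glSub hp a hm1
    have hgb : elemUnit pj qj hq b ∈ glSub R γ := elem_mem_glSub hq b hm2
    have hgc : elemUnit pi qj hil (a * b) ∈ glSub R γ := elem_mem_glSub hil (a * b) hm3
    rw [_root_.map_mul, map_inv, map_commutatorElement, mul_inv_eq_one]
    simp only [FreeGroup.lift_apply_of]
    rw [bigF_eq G f hcompat hγ ⟨(pi, pj), hp⟩ a hm1 hga,
      bigF_eq G f hcompat hγ ⟨(pj, qj), hq⟩ b hm2 hgb,
      bigF_eq G f hcompat hγ ⟨(pi, qj), hil⟩ (a * b) hm3 hgc,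
      ← map_commutatorElement]
    refine congrArg (f γ hγ) ?_
    apply Subtype.ext
    rw [commutatorElement_def]
    simp only [Subgroup.coe_mul, Subgroup.coe_inv]
    rw [← commutatorElement_def]
    exact elemUnit_commutator pi pj qj hp hq hil a b

/-- The canonical homomorphism `St_n(R) → G` induced by a compatible family. -/
noncomputable def hUniv : Steinberg n R →* G :=
  PresentedGroup.toGroup (bigF_rels G f hcompat)

include hcompat in
lemma hUniv_mem_eq {α : Set (Fin n × Fin n)} (hα : IsClosedSubset α) :
    ∀ g (hg : g ∈ Hgrp R α 0), hUniv G f hcompat g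
      = f α hα ⟨phi g, by rw [← map_Hgrp]; exact Subgroup.mem_map.2 ⟨g, hg, rfl⟩⟩ := by
  intro g hg
  induction hg using Subgroup.closure_induction with
  | mem x hx =>
    obtain ⟨p, r, hpα, -, rfl⟩ := hx
    have h1 : hUniv G f hcompat (xgen p r) = bigF G f (p, r) :=
      PresentedGroup.toGroup.of (bigF_rels G f hcompat)
    have hm : elemUnit p.1.1 p.1.2 p.2 r ∈ glSub R α :=
      elem_mem_glSub p.2 r (Prod.mk.eta ▸ hpα)
    rw [h1, bigF_eq G f hcompat hα p r hpα hm]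
    exact congrArg (f α hα) (Subtype.ext (by
      show elemUnit p.1.1 p.1.2 p.2 r = phi (xgen p r)
      rw [phi_of]))
  | one =>
    rw [_root_.map_one]
    exact (_root_.map_one (f α hα)).symm.trans
      (congrArg (f α hα) (Subtype.ext (_root_.map_one phi)).symm)
  | mul x y hx hy ihx ihy =>
    rw [_root_.map_mul, ihx, ihy, ← _root_.map_mul]
    exact congrArg (f α hα) (Subtype.ext ((_root_.map_mul phi x y).symm))
  | inv x hx ihx =>
    rw [_root_.map_inv, ihx, ← _root_.map_inv]
    exact congrArg (f α hα) (Subtype.ext ((_root_.map_inv phi x).symm))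

include hcompat in
lemma hUniv_kappa {α : Set (Fin n × Fin n)} (hα : IsClosedSubset α) (x : glSub R α) :
    hUniv G f hcompat (kappa hα x) = f α hα x := by
  rw [hUniv_mem_eq G f hcompat hα (kappa hα x) (kappa_mem hα x)]
  exact congrArg (f α hα) (Subtype.ext (phi_kappa hα x))

include hcompat in
lemma hUniv_unique (h' : Steinberg n R →* G)
    (hp : ∀ (α : Set (Fin n × Fin n)) (hα : IsClosedSubset α) (x : glSub R α),
      h' (kappa hα x) = f α hα x) : h' = hUniv G f hcompat := by
  apply PresentedGroup.ext
  intro x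
  obtain ⟨p, r⟩ := x
  have hsingle : IsClosedSubset ({p.1} : Set (Fin n × Fin n)) := closed_single p.2
  have hmem : (p.1.1, p.1.2) ∈ ({p.1} : Set (Fin n × Fin n)) :=
    Set.mem_singleton_iff.2 Prod.mk.eta
  have hu : elemUnit p.1.1 p.1.2 p.2 r ∈ glSub R {p.1} := elem_mem_glSub p.2 r hmem
  have hk : kappa hsingle ⟨elemUnit p.1.1 p.1.2 p.2 r, hu⟩ = xgen p r := by
    rw [kappa_elem hsingle p.2 r hmem hu]
  have hval := hp {p.1} hsingle ⟨elemUnit p.1.1 p.1.2 p.2 r, hu⟩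
  rw [hk] at hval
  show h' (xgen p r) = hUniv G f hcompat (xgen p r)
  rw [hval]
  have h2 : hUniv G f hcompat (xgen p r) = bigF G f (p, r) :=
    PresentedGroup.toGroup.of (bigF_rels G f hcompat)
  rw [h2]
  exact (bigF_eq G f hcompat hsingle p r rfl hu).symm

end StProof

end Part8
/-- there is a group isomorphism `St_n(R) ≅ colim_{α ∈ Φ} GL_n(R)_α` under which
the canonical homomorphism `colim_{α ∈ Φ} GL_n(R)_α → GL_n(R)` (induced by the inclusions
`GL_n(R)_α ≤ GL_n(R)`) corresponds to the homomorphism `φ : St_n(R) → GL_n(R)` with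
`φ(x_{ij}(r)) = ε_{ij}(r)`.  Equivalently, as stated here: `St_n(R)` carries a cocone
`κ_α : GL_n(R)_α → St_n(R)` compatible with the inclusions `GL_n(R)_α ↪ GL_n(R)_β`, this
cocone satisfies the universal property of the colimit, and `φ ∘ κ_α` is the inclusion
`GL_n(R)_α ≤ GL_n(R)` (so that `φ` is the canonical homomorphism out of the colimit). -/
theorem steinberg_iso_colimit_glSub (n : ℕ) (R : Type) [Ring R] :
    ∃ φ : Steinberg n R →* (Matrix (Fin n) (Fin n) R)ˣ,
      (∀ (p : {p : Fin n × Fin n // p ∈ deltaSet n}) (r : R),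
          φ (PresentedGroup.of (p, r)) = elemUnit p.1.1 p.1.2 p.2 r) ∧
      ∃ κ : ∀ (α : Set (Fin n × Fin n)), IsClosedSubset α → (glSub R α →* Steinberg n R),
        (∀ (α β : Set (Fin n × Fin n)) (hα : IsClosedSubset α) (hβ : IsClosedSubset β),
          α ⊆ β → ∀ (x : (Matrix (Fin n) (Fin n) R)ˣ) (hxα : x ∈ glSub R α)
            (hxβ : x ∈ glSub R β), κ β hβ ⟨x, hxβ⟩ = κ α hα ⟨x, hxα⟩) ∧
        (∀ (α : Set (Fin n × Fin n)) (hα : IsClosedSubset α) (x : glSub R α),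
          φ (κ α hα x) = x.1) ∧
        ∀ (G : Type) [Group G] (f : ∀ α : Set (Fin n × Fin n), IsClosedSubset α → (glSub R α →* G)),
          (∀ (α β : Set (Fin n × Fin n)) (hα : IsClosedSubset α) (hβ : IsClosedSubset β),
            α ⊆ β → ∀ (x : (Matrix (Fin n) (Fin n) R)ˣ) (hxα : x ∈ glSub R α)
              (hxβ : x ∈ glSub R β), f β hβ ⟨x, hxβ⟩ = f α hα ⟨x, hxα⟩) →
          ∃! h : Steinberg n R →* G,
            ∀ (α : Set (Fin n × Fin n)) (hα : IsClosedSubset α) (x : glSub R α),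
              h (κ α hα x) = f α hα x := by
  refine ⟨StProof.phi, ?_, fun α hα => StProof.kappa hα, ?_, ?_, ?_⟩
  · intro p r
    exact StProof.phi_of p r
  · intro α β hα hβ hsub x hxα hxβ
    exact StProof.kappa_compat hα hβ hsub x hxα hxβ
  · intro α hα x
    exact StProof.phi_kappa hα x
  · intro G _ f hcomp
    refine ⟨StProof.hUniv G f hcomp, ?_, ?_⟩
    · intro α hα x
      exact StProof.hUniv_kappa G f hcomp hα x
    · intro h' hp'
      exact StProof.hUniv_unique G f hcomp h' hp'
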